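/- If F : C → D is a functor between small finitely cocomplete categories preserving finite colimits, then the induced functor Ind(F) : Ind(C) → Ind(D), obtained by extending F to preserve filtered colimits, admits a right adjoint. -/

import Mathlib

set_option linter.unusedSectionVars false
set_option maxHeartbeats 800000

open CategoryTheory CategoryTheory.Limits Opposite

universe u

namespace IndExtensionAux

section IndYoneda

variable {C : Type u} [SmallCategory C]

noncomputable def indYonedaEquiv (c : C) (X : Ind C) :
    (Ind.yoneda.obj c ⟶ X) ≃ ((Ind.inclusion C).obj X).obj (op c) :=
  Ind.inclusion.fullyFaithful.homEquiv.trans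
    ((Iso.homCongr (Ind.yonedaCompInclusion.app c) (Iso.refl _)).trans yonedaEquiv)

lemma indYonedaEquiv_eq (c : C) (X : Ind C) (f : Ind.yoneda.obj c ⟶ X) :
    indYonedaEquiv c X f =
      yonedaEquiv (Ind.yonedaCompInclusion.inv.app c ≫ (Ind.inclusion C).map f) := by
  simp [indYonedaEquiv, Functor.FullyFaithful.homEquiv, Iso.homCongr]

lemma indYonedaEquiv_comp (c : C) {X X' : Ind C} (f : Ind.yoneda.obj c ⟶ X) (g : X ⟶ X') :
    indYonedaEquiv c X' (f ≫ g) =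
      ((Ind.inclusion C).map g).app (op c) (indYonedaEquiv c X f) := by
  rw [indYonedaEquiv_eq, indYonedaEquiv_eq, Functor.map_comp, ← Category.assoc,
    yonedaEquiv_comp]

lemma indYonedaEquiv_yoneda_comp {c c' : C} (γ : c' ⟶ c) {X : Ind C}
    (f : Ind.yoneda.obj c ⟶ X) :
    indYonedaEquiv c' X (Ind.yoneda.map γ ≫ f) =
      ((Ind.inclusion C).obj X).map γ.op (indYonedaEquiv c X f) := by
  rw [indYonedaEquiv_eq, indYonedaEquiv_eq, Functor.map_comp, yonedaEquiv_naturality]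
  congr 1
  rw [← Category.assoc, ← Category.assoc]
  congr 1
  exact (Ind.yonedaCompInclusion.inv.naturality γ).symm

lemma indYonedaEquiv_yoneda_map {c c' : C} (ψ : c ⟶ c') :
    indYonedaEquiv c (Ind.yoneda.obj c') (Ind.yoneda.map ψ) =
      (Ind.yonedaCompInclusion.inv.app c').app (op c) ψ := by
  rw [indYonedaEquiv_eq]
  have : Ind.yonedaCompInclusion.inv.app c ≫ (Ind.inclusion C).map (Ind.yoneda.map ψ) =
      yoneda.map ψ ≫ Ind.yonedaCompInclusion.inv.app c' :=
    (Ind.yonedaCompInclusion.inv.naturality ψ).symm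
  rw [this, yonedaEquiv_comp, yonedaEquiv_yoneda_map]

end IndYoneda

lemma isLeftKanExtension_of_iso_left {C : Type*} {D : Type*} {H : Type*}
    [Category C] [Category D] [Category H]
    {L : C ⥤ D} {F₀ F : C ⥤ H} (i : F₀ ≅ F) (F' : D ⥤ H) (α : F ⟶ L ⋙ F')
    [F'.IsLeftKanExtension α] : F'.IsLeftKanExtension (i.hom ≫ α) where
  nonempty_isUniversal := ⟨by
    refine IsInitial.ofUniqueHom (fun Q => StructuredArrow.homMk
      (F'.descOfIsLeftKanExtension α _ (i.inv ≫ Q.hom)) ?_) (fun Q m => ?_)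
    · change (i.hom ≫ α) ≫ Functor.whiskerLeft L (F'.descOfIsLeftKanExtension α _ (i.inv ≫ Q.hom)) = Q.hom
      rw [Category.assoc, Functor.descOfIsLeftKanExtension_fac, Iso.hom_inv_id_assoc]
    · ext : 1
      apply F'.hom_ext_of_isLeftKanExtension α
      have := StructuredArrow.w m
      dsimp at this ⊢
      simp [Functor.descOfIsLeftKanExtension_fac, ← this]
      exact ((congrArg (i.inv ≫ ·) (Category.assoc _ _ _)).trans
        (Iso.inv_hom_id_assoc i _)).symm.trans (Functor.descOfIsLeftKanExtension_fac _ _ _ _).symm⟩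

section Main

variable {C D : Type u} [SmallCategory C] [SmallCategory D]
  [HasFiniteColimits C] [HasFiniteColimits D]
  (F : C ⥤ D) [PreservesFiniteColimits F]
  (G : Ind C ⥤ Ind D) [PreservesFilteredColimits G]
  (h : Ind.yoneda ⋙ G ≅ F ⋙ Ind.yoneda)

/-- The comparison map `(Ind.inclusion C).obj X ⟶ F.op ⋙ (Ind.inclusion D).obj (G.obj X)`. -/
noncomputable def uApp (X : Ind C) :
    (Ind.inclusion C).obj X ⟶ F.op ⋙ (Ind.inclusion D).obj (G.obj X) where
  app c := TypeCat.ofHom fun x => indYonedaEquiv (F.obj c.unop) (G.obj X)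
    (h.inv.app c.unop ≫ G.map ((indYonedaEquiv c.unop X).symm x))
  naturality a b γ := by
    refine ConcreteCategory.hom_ext _ _ fun x => ?_
    set φ := (indYonedaEquiv a.unop X).symm x with hφ
    have hx : x = indYonedaEquiv a.unop X φ := (Equiv.apply_symm_apply _ _).symm
    have h1 : ((Ind.inclusion C).obj X).map γ x =
        indYonedaEquiv b.unop X (Ind.yoneda.map γ.unop ≫ φ) := by
      rw [hx, indYonedaEquiv_yoneda_comp]
      rfl
    dsimp only [Functor.comp_map, types_comp_apply, TypeCat.ofHom_apply, Functor.comp_obj, Functor.op_obj,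
      Functor.op_map]
    rw [h1, Equiv.symm_apply_apply]
    have h2 : h.inv.app b.unop ≫ G.map (Ind.yoneda.map γ.unop ≫ φ) =
        Ind.yoneda.map (F.map γ.unop) ≫ h.inv.app a.unop ≫ G.map φ := by
      rw [G.map_comp, ← Category.assoc, ← Category.assoc]
      congr 1
      exact (h.inv.naturality γ.unop).symm
    rw [h2, indYonedaEquiv_yoneda_comp]

lemma uApp_naturality {X Y : Ind C} (f : X ⟶ Y) :
    (Ind.inclusion C).map f ≫ uApp F G h Y =
      uApp F G h X ≫ Functor.whiskerLeft F.op ((Ind.inclusion D).map (G.map f)) := by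
  refine NatTrans.ext (funext fun c => ConcreteCategory.hom_ext _ _ fun x => ?_)
  set φ := (indYonedaEquiv c.unop X).symm x with hφ
  have hx : x = indYonedaEquiv c.unop X φ := (Equiv.apply_symm_apply _ _).symm
  have h1 : ((Ind.inclusion C).map f).app c x = indYonedaEquiv c.unop Y (φ ≫ f) := by
    rw [hx, indYonedaEquiv_comp]
  dsimp only [NatTrans.comp_app, types_comp_apply, TypeCat.ofHom_apply, Functor.whiskerLeft_app, Functor.comp_obj,
    Functor.op_obj, uApp]
  rw [h1, Equiv.symm_apply_apply, ← hφ, ← indYonedaEquiv_comp, G.map_comp, Category.assoc]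

/-- The canonical natural transformation `Ind.inclusion C ⋙ F.op.lan ⟶ G ⋙ Ind.inclusion D`. -/
noncomputable def theta : Ind.inclusion C ⋙ F.op.lan ⟶ G ⋙ Ind.inclusion D where
  app X := Functor.descOfIsLeftKanExtension (F.op.lan.obj ((Ind.inclusion C).obj X))
    (F.op.lanUnit.app ((Ind.inclusion C).obj X)) _ (uApp F G h X)
  naturality X Y f := by
    dsimp only [Functor.comp_obj, Functor.comp_map]
    apply Functor.hom_ext_of_isLeftKanExtension _
      (F.op.lanUnit.app ((Ind.inclusion C).obj X))
    have h1 := F.op.lanUnit.naturality ((Ind.inclusion C).map f)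
    dsimp at h1
    rw [Functor.whiskerLeft_comp, Functor.whiskerLeft_comp, ← Category.assoc, ← h1, Category.assoc,
      Functor.descOfIsLeftKanExtension_fac, ← Category.assoc,
      Functor.descOfIsLeftKanExtension_fac, uApp_naturality]

lemma theta_fac (X : Ind C) :
    F.op.lanUnit.app ((Ind.inclusion C).obj X) ≫ Functor.whiskerLeft F.op ((theta F G h).app X) =
      uApp F G h X :=
  Functor.descOfIsLeftKanExtension_fac _ _ _ _

lemma comm_yoneda (c₀ : C) :
    ((Ind.yonedaCompInclusion.app c₀).hom ≫ yonedaMap F c₀) ≫ Functor.whiskerLeft F.op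
        ((Functor.mapIso (Ind.inclusion D) (h.app c₀) ≪≫
          Ind.yonedaCompInclusion.app (F.obj c₀)).symm.hom) =
      uApp F G h (Ind.yoneda.obj c₀) := by
  refine NatTrans.ext (funext fun c => ConcreteCategory.hom_ext _ _ fun x => ?_)
  set ψ : c.unop ⟶ c₀ := (Ind.yonedaCompInclusion.app c₀).hom.app c x with hψ
  have hx : x = indYonedaEquiv c.unop (Ind.yoneda.obj c₀) (Ind.yoneda.map ψ) := by
    rw [indYonedaEquiv_yoneda_map]
    have h0 := ConcreteCategory.congr_hom (congr_app (Ind.yonedaCompInclusion.app c₀).hom_inv_id c) x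
    dsimp at h0 ⊢
    rw [hψ]
    exact h0.symm
  have hnat : h.inv.app c.unop ≫ G.map (Ind.yoneda.map ψ) =
      Ind.yoneda.map (F.map ψ) ≫ h.inv.app c₀ := (h.inv.naturality ψ).symm
  dsimp only [NatTrans.comp_app, types_comp_apply, TypeCat.ofHom_apply, Functor.whiskerLeft_app, Iso.trans_symm,
    Iso.symm_hom, Iso.trans_inv, Functor.mapIso_inv, Iso.app_inv, Functor.comp_obj,
    Functor.op_obj, uApp]
  conv_rhs => rw [hx, Equiv.symm_apply_apply, hnat, indYonedaEquiv_comp,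
    indYonedaEquiv_yoneda_map]
  rfl

lemma isIso_theta_app_yoneda (c₀ : C) : IsIso ((theta F G h).app (Ind.yoneda.obj c₀)) := by
  haveI : ((Ind.inclusion C ⋙ F.op.lan).obj (Ind.yoneda.obj c₀)).IsLeftKanExtension
      (F.op.lanUnit.app ((Ind.inclusion C).obj (Ind.yoneda.obj c₀))) :=
    inferInstanceAs ((F.op.lan.obj ((Ind.inclusion C).obj (Ind.yoneda.obj c₀))).IsLeftKanExtension
      (F.op.lanUnit.app ((Ind.inclusion C).obj (Ind.yoneda.obj c₀))))
  rw [← Functor.isLeftKanExtension_iff_isIso ((theta F G h).app (Ind.yoneda.obj c₀))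
    (F.op.lanUnit.app ((Ind.inclusion C).obj (Ind.yoneda.obj c₀)))
    (uApp F G h (Ind.yoneda.obj c₀)) (theta_fac F G h (Ind.yoneda.obj c₀))]
  haveI : (yoneda.obj (F.obj c₀)).IsLeftKanExtension
      ((Ind.yonedaCompInclusion.app c₀).hom ≫ yonedaMap F c₀) :=
    isLeftKanExtension_of_iso_left (Ind.yonedaCompInclusion.app c₀) _ (yonedaMap F c₀)
  exact Functor.isLeftKanExtension_of_iso
    (Functor.mapIso (Ind.inclusion D) (h.app c₀) ≪≫
      Ind.yonedaCompInclusion.app (F.obj c₀)).symm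
    ((Ind.yonedaCompInclusion.app c₀).hom ≫ yonedaMap F c₀)
    (uApp F G h (Ind.yoneda.obj c₀)) (comm_yoneda F G h c₀)

lemma isIso_theta_app (X : Ind C) : IsIso ((theta F G h).app X) := by
  haveI : PreservesColimitsOfSize.{u, u} F.op.lan :=
    (F.op.lanAdjunction (Type u)).leftAdjoint_preservesColimits
  set A := Ind.inclusion C ⋙ F.op.lan with hA
  set B := G ⋙ Ind.inclusion D with hB
  set K : X.presentation.I ⥤ Ind C := X.presentation.F ⋙ Ind.yoneda with hK
  set θ := theta F G h with hθ
  haveI : ∀ j, IsIso ((Functor.whiskerLeft K θ).app j) := fun j =>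
    isIso_theta_app_yoneda F G h (X.presentation.F.obj j)
  haveI : IsIso (Functor.whiskerLeft K θ) := NatIso.isIso_of_isIso_app _
  haveI : IsIso (colimMap (Functor.whiskerLeft K θ)) :=
    inferInstanceAs (IsIso (colim.map (Functor.whiskerLeft K θ)))
  have key : (preservesColimitIso A K).inv ≫ θ.app (colimit K) =
      colimMap (Functor.whiskerLeft K θ) ≫ (preservesColimitIso B K).inv := by
    apply colimit.hom_ext
    intro j
    simp only [ι_preservesColimitIso_inv_assoc, ι_colimMap_assoc, ι_preservesColimitIso_inv,
      Functor.whiskerLeft_app, NatTrans.naturality]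
    congr 1
    exact (ι_preservesColimitIso_inv ..).symm
  have key2 : θ.app (colimit K) =
      (preservesColimitIso A K).hom ≫ colimMap (Functor.whiskerLeft K θ) ≫
        (preservesColimitIso B K).inv := by
    rw [← key, Iso.hom_inv_id_assoc]
  haveI : IsIso (θ.app (colimit K)) := by rw [key2]; infer_instance
  have h2 := θ.naturality (Ind.colimitPresentationCompYoneda X).hom
  have key3 : θ.app X = A.map (Ind.colimitPresentationCompYoneda X).inv ≫
      θ.app (colimit K) ≫ B.map (Ind.colimitPresentationCompYoneda X).hom := by
    rw [← h2, ← Functor.map_comp_assoc, Iso.inv_hom_id, CategoryTheory.Functor.map_id, Category.id_comp]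
  rw [key3]
  infer_instance

lemma isIndObject_restriction (Y : Ind D) :
    IsIndObject (F.op ⋙ (Ind.inclusion D).obj Y) := by
  haveI : IsFiltered (CostructuredArrow yoneda ((Ind.inclusion D).obj Y)) :=
    Y.isIndObject_inclusion_obj.isFiltered
  haveI : PreservesFiniteLimits ((Ind.inclusion D).obj Y) :=
    preservesFiniteLimits_of_isFiltered_costructuredArrow_yoneda _
  haveI : PreservesFiniteLimits F.op := preservesFiniteLimits_op F
  haveI : PreservesFiniteLimits (F.op ⋙ (Ind.inclusion D).obj Y) :=
    comp_preservesFiniteLimits _ _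
  haveI : IsFiltered (CostructuredArrow yoneda (F.op ⋙ (Ind.inclusion D).obj Y)) :=
    isFiltered_costructuredArrow_yoneda_of_preservesFiniteLimits _
  haveI : EssentiallySmall.{u} (CostructuredArrow yoneda (F.op ⋙ (Ind.inclusion D).obj Y)) :=
    essentiallySmall_of_small_of_locallySmall _
  haveI : FinallySmall.{u} (CostructuredArrow yoneda (F.op ⋙ (Ind.inclusion D).obj Y)) :=
    finallySmall_of_essentiallySmall _
  exact isIndObject_of_isFiltered_of_finallySmall _

end Main

end IndExtensionAux

open IndExtensionAux in
/-- If `F : C ⥤ D` preserves finite colimits between small finitely cocomplete categories,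
then any filtered-colimit-preserving extension `G : Ind C ⥤ Ind D` of `F` (i.e. satisfying
`Ind.yoneda ⋙ G ≅ F ⋙ Ind.yoneda`) admits a right adjoint. -/
theorem ind_extension_isLeftAdjoint {C D : Type u} [SmallCategory C] [SmallCategory D]
    [HasFiniteColimits C] [HasFiniteColimits D]
    (F : C ⥤ D) [PreservesFiniteColimits F]
    (G : Ind C ⥤ Ind D) [PreservesFilteredColimits G]
    (h : Ind.yoneda ⋙ G ≅ F ⋙ Ind.yoneda) : G.IsLeftAdjoint := by
  haveI : ∀ X, IsIso ((theta F G h).app X) := fun X => isIso_theta_app F G h X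
  let adj := F.op.lanAdjunction (Type u)
  let Robj : Ind D → Ind C := fun Y => (Ind.equivalence C).inverse.obj
    ⟨F.op ⋙ (Ind.inclusion D).obj Y, isIndObject_restriction F Y⟩
  let ρ : ∀ Y : Ind D, (Ind.inclusion C).obj (Robj Y) ≅ F.op ⋙ (Ind.inclusion D).obj Y :=
    fun Y => (ObjectProperty.ι _).mapIso ((Ind.equivalence C).counitIso.app
      ⟨F.op ⋙ (Ind.inclusion D).obj Y, isIndObject_restriction F Y⟩)
  let e : ∀ (X : Ind C) (Y : Ind D), (G.obj X ⟶ Y) ≃ (X ⟶ Robj Y) := fun X Y =>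
    Ind.inclusion.fullyFaithful.homEquiv.trans
      ((Iso.homCongr (asIso ((theta F G h).app X)).symm (Iso.refl ((Ind.inclusion D).obj Y))).trans
        ((adj.homEquiv ((Ind.inclusion C).obj X) ((Ind.inclusion D).obj Y)).trans
          ((Iso.homCongr (Iso.refl ((Ind.inclusion C).obj X)) (ρ Y).symm).trans
            Ind.inclusion.fullyFaithful.homEquiv.symm)))
  have e_eq : ∀ (X : Ind C) (Y : Ind D) (g : G.obj X ⟶ Y),
      e X Y g = Ind.inclusion.fullyFaithful.preimage
        ((adj.homEquiv _ _) ((theta F G h).app X ≫ (Ind.inclusion D).map g) ≫ (ρ Y).inv) := by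
    intro X Y g
    simp [e, Iso.homCongr, Functor.FullyFaithful.homEquiv, Equiv.symm]
  have he : ∀ (X' X : Ind C) (Y : Ind D) (f : X' ⟶ X) (g : G.obj X ⟶ Y),
      e X' Y (G.map f ≫ g) = f ≫ e X Y g := by
    intro X' X Y f g
    rw [e_eq, e_eq]
    have h1 : (theta F G h).app X' ≫ (Ind.inclusion D).map (G.map f ≫ g) =
        F.op.lan.map ((Ind.inclusion C).map f) ≫ (theta F G h).app X ≫
          (Ind.inclusion D).map g := by
      have hnat := (theta F G h).naturality f
      dsimp only [Functor.comp_map] at hnat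
      rw [Functor.map_comp, ← reassoc_of% hnat]
    rw [h1, Adjunction.homEquiv_naturality_left, Category.assoc]
    apply Ind.inclusion.fullyFaithful.map_injective
    simp
  exact ⟨Adjunction.rightAdjointOfEquiv e he, ⟨Adjunction.adjunctionOfEquivRight e he⟩⟩
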